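/- Let X be a finite metric space, m ∈ ℕ, and K < ∞. If X is K-TSP-efficient and X admits a biLipschitz embedding into ℓ1^m (i.e. c_{ℓ1^m}(X) < ∞, equivalently c_1^{m,dom}(X,d) < ∞), then (La(X), d_La) admits a C-biLipschitz embedding into an ℓ1-product of 3m ℝ-trees, where C ≤ 6K·c_1^{m,dom}(X,d) ≤ 6Km·c_{ℓ1^m}(X). -/

import Mathlib

open Metric Set
open scoped Classical ENNReal NNReal

noncomputable section

/-- The underlying set of the lamplighter space over `X`: a lamp configuration
(a finite set of lit lamps) together with the position of the lamplighter. -/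
abbrev Lamp (X : Type*) := Finset X × X

namespace Lamplighter

variable {X Y Z : Type*}

/-- The length of the path visiting the points of a list in order,
with respect to the distance function `d`. -/
def pathLength (d : X → X → ℝ) : List X → ℝ
  | [] => 0
  | [_] => 0
  | x :: y :: l => d x y + pathLength d (y :: l)

/-- The symmetric difference of the lamp configurations of `p` and `q`, as a set. -/
def sd (p q : Lamp X) : Set X :=
  ((p.1 : Set X) \ (q.1 : Set X)) ∪ ((q.1 : Set X) \ (p.1 : Set X))

/-- The traveling salesman semimetric on the lamplighter space:
the infimum of lengths of finite paths starting at `p.2`, ending at `q.2`, and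
visiting every point of the symmetric difference of the configurations. -/
def TSP (d : X → X → ℝ) (p q : Lamp X) : ℝ :=
  sInf { s : ℝ | ∃ l : List X, l.head? = some p.2 ∧ l.getLast? = some q.2 ∧
    (∀ a ∈ sd p q, a ∈ l) ∧ s = pathLength d l }

/-- The diameter (in `ℝ≥0∞`) of a set with respect to a distance function `d`. -/
def ediamD (d : X → X → ℝ) (A : Set X) : ℝ≥0∞ :=
  ⨆ x ∈ A, ⨆ y ∈ A, ENNReal.ofReal (d x y)

/-- The traveling salesman shortcut semimetric:
`TSCP((A,x),(B,y)) = diam({x,y} ∪ (A Δ B))`. -/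
def TSCP (d : X → X → ℝ) (p q : Lamp X) : ℝ :=
  (ediamD d ({p.2, q.2} ∪ sd p q)).toReal

/-- `ρ((A,x),(B,y))` is `0` if `A = B` and `1` otherwise. -/
def rho (p q : Lamp X) : ℝ := if p.1 = q.1 then 0 else 1

/-- The lamplighter metric `d_La = TSP + ρ`. -/
def dLa (d : X → X → ℝ) (p q : Lamp X) : ℝ := TSP d p q + rho p q

/-- `X` is `K`-TSP-efficient if `TSP ≤ K • TSCP` on `La(X)²`. -/
def TSPEfficient (d : X → X → ℝ) (K : ℝ) : Prop :=
  ∀ p q : Lamp X, TSP d p q ≤ K * TSCP d p q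

/-- A weak `C`-biLipschitz embedding between spaces with distance functions `dY`, `dZ`:
a family of maps `φ t : Y → Z` (for `t > 0`) such that each `φ t` is `σ t`-Lipschitz
and `dY x y ≥ C*t` implies `dZ (φ t x) (φ t y) ≥ t * σ t`. -/
def WeakBiLip (dY : Y → Y → ℝ) (dZ : Z → Z → ℝ) (C : ℝ) : Prop :=
  ∃ φ : ℝ → Y → Z, ∀ t : ℝ, 0 < t → ∃ σ : ℝ, 0 < σ ∧
    (∀ x y : Y, dZ (φ t x) (φ t y) ≤ σ * dY x y) ∧
    (∀ x y : Y, C * t ≤ dY x y → t * σ ≤ dZ (φ t x) (φ t y))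

/-- `f` is a `C`-biLipschitz embedding (an injective map of biLipschitz
distortion at most `C`, allowing an overall scaling factor `s`). -/
def BiLipWith (dY : Y → Y → ℝ) (dZ : Z → Z → ℝ) (C : ℝ) (f : Y → Z) : Prop :=
  Function.Injective f ∧ ∃ s : ℝ, 0 < s ∧
    ∀ x y : Y, s * dY x y ≤ dZ (f x) (f y) ∧ dZ (f x) (f y) ≤ C * s * dY x y

/-- Nagata dimension at most `n` with constant at most `γ`: for every scale `s > 0`
there is a covering by sets of diameter at most `γ s` such that every set of diameter
less than `s` meets at most `n + 1` members of the covering. -/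
def NagataDimD (d : Y → Y → ℝ) (n : ℕ) (γ : ℝ) : Prop :=
  ∀ s : ℝ, 0 < s → ∃ B : Set (Set Y),
    (∀ y : Y, ∃ b ∈ B, y ∈ b) ∧
    (∀ b ∈ B, ediamD d b ≤ ENNReal.ofReal (γ * s)) ∧
    (∀ A : Set Y, ediamD d A < ENNReal.ofReal s →
      {b | b ∈ B ∧ (b ∩ A).Nonempty}.encard ≤ ((n : ℕ∞) + 1))

/-- Markov type 2 with constant `M`, for the distance function `d`: for every stationary
reversible Markov chain on a finite state space (given by a stationary distribution `μ`
and a reversible stochastic transition matrix `P`), every map `f` into the space, and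
every time `t`, `E[d(f(Z_t),f(Z_0))²] ≤ M² t E[d(f(Z_1),f(Z_0))²]`. -/
def HasMarkovType2 (d : Y → Y → ℝ) (M : ℝ) : Prop :=
  ∀ (n : ℕ) (μ : Fin n → ℝ) (P : Matrix (Fin n) (Fin n) ℝ),
    (∀ i, 0 ≤ μ i) → (∑ i, μ i) = 1 →
    (∀ i j, 0 ≤ P i j) → (∀ i, (∑ j, P i j) = 1) →
    (∀ i j, μ i * P i j = μ j * P j i) →
    ∀ (f : Fin n → Y) (t : ℕ),
      (∑ i, ∑ j, μ i * (P ^ t) i j * d (f i) (f j) ^ 2) ≤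
        M ^ 2 * t * ∑ i, ∑ j, μ i * P i j * d (f i) (f j) ^ 2

/-- `D`-doubling: every ball of radius `r` can be covered by `D` balls of radius `r/2`. -/
def Doubling (d : Y → Y → ℝ) (D : ℕ) : Prop :=
  ∀ r : ℝ, 0 < r → ∀ x : Y, ∃ c : Fin D → Y,
    ∀ y : Y, d x y ≤ r → ∃ i, d (c i) y ≤ r / 2

/-- `A` is an arc from `x` to `y`: the image of an injective continuous map of `[0,1]`
sending the endpoints to `x` and `y`. -/
def IsArc {T : Type*} [MetricSpace T] (x y : T) (A : Set T) : Prop :=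
  ∃ γ : ℝ → T, ContinuousOn γ (Icc 0 1) ∧ InjOn γ (Icc 0 1) ∧
    γ 0 = x ∧ γ 1 = y ∧ γ '' (Icc 0 1) = A

/-- `A` is a geodesic segment from `x` to `y`: the image of an isometric embedding
of `[0, dist x y]` sending the endpoints to `x` and `y`. -/
def IsGeodesicSeg {T : Type*} [MetricSpace T] (x y : T) (A : Set T) : Prop :=
  ∃ γ : ℝ → T, γ 0 = x ∧ γ (dist x y) = y ∧
    (∀ s ∈ Icc (0 : ℝ) (dist x y), ∀ t ∈ Icc (0 : ℝ) (dist x y),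
      dist (γ s) (γ t) = |s - t|) ∧
    γ '' (Icc 0 (dist x y)) = A

/-- `T` is an ℝ-tree: any two (distinct) points are joined by a unique arc,
and this arc is a geodesic. -/
def IsRTree (T : Type*) [MetricSpace T] : Prop :=
  ∀ x y : T, x ≠ y →
    (∃ A : Set T, IsArc x y A) ∧
    (∀ A A' : Set T, IsArc x y A → IsArc x y A' → A = A') ∧
    (∀ A : Set T, IsArc x y A → IsGeodesicSeg x y A)

/-- The sup (ℓ∞-product) distance on a finite product of metric spaces. -/
def piSupDist {n : ℕ} {T : Fin n → Type*} (I : ∀ i, MetricSpace (T i)) :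
    (∀ i, T i) → (∀ i, T i) → ℝ :=
  letI := I
  fun f g => dist f g

/-- The ℓ1-product distance on a finite product of metric spaces. -/
def piL1Dist {n : ℕ} {T : Fin n → Type*} (I : ∀ i, MetricSpace (T i)) :
    (∀ i, T i) → (∀ i, T i) → ℝ :=
  letI := I
  fun f g => ∑ i, dist (f i) (g i)

/-- The ℓ1 distance on `ℝ^m`. -/
def l1Dist (m : ℕ) (x y : Fin m → ℝ) : ℝ := ∑ i, |x i - y i|

/-- The ℓp distance on `ℝ^m`. -/
def lpDist (m : ℕ) (p : ℝ) (x y : Fin m → ℝ) : ℝ :=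
  (∑ i, |x i - y i| ^ p) ^ (1 / p)

/-- The (pseudo)distance of the ℝ-star over the index type `ι`: the wedge sum of
copies of `[0,∞)` indexed by `ι`, glued at `0`. -/
def starDist {ι : Type*} (p q : ι × ℝ≥0) : ℝ :=
  if p.1 = q.1 then |(p.2 : ℝ) - (q.2 : ℝ)| else (p.2 : ℝ) + (q.2 : ℝ)

/-- The sup (ℓ∞-product) of finitely many distance functions. -/
def supD {n : ℕ} {T : Fin n → Type*} (d : ∀ i, T i → T i → ℝ) (f g : ∀ i, T i) : ℝ :=
  ((Finset.univ.sup fun i => (d i (f i) (g i)).toNNReal : ℝ≥0) : ℝ)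

/-- The infimum of distortions of biLipschitz embeddings of `(Y, dY)` into `(Z, dZ)`
(`∞` if there is no such embedding). -/
def cEmb (dY : Y → Y → ℝ) (dZ : Z → Z → ℝ) : ℝ≥0∞ :=
  sInf { D : ℝ≥0∞ | ∃ C : ℝ, 0 < C ∧ D = ENNReal.ofReal C ∧
    ∃ f : Y → Z, BiLipWith dY dZ C f }

/-- `c_1^{m,dom}(X,d)`: the infimum of all `D > 0` such that there exist injective
`1`-Lipschitz maps `φ i : X → ℝ` and weights `α i ≥ 0` summing to `1` with
`∑ i, α i * |φ i x - φ i y| ≥ d x y / D` for all `x y` (`∞` if there is none). -/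
def c1dom (d : X → X → ℝ) (m : ℕ) : ℝ≥0∞ :=
  sInf { D : ℝ≥0∞ | ∃ C : ℝ, 0 < C ∧ D = ENNReal.ofReal C ∧
    ∃ (φ : Fin m → X → ℝ) (α : Fin m → ℝ),
      (∀ i, Function.Injective (φ i)) ∧
      (∀ i, ∀ x y : X, |φ i x - φ i y| ≤ d x y) ∧
      (∀ i, 0 ≤ α i) ∧ (∑ i, α i) = 1 ∧
      ∀ x y : X, d x y / C ≤ ∑ i, α i * |φ i x - φ i y| }

/-- The Hamming distance on the Hamming cube `{0,1}^M`, as a real number. -/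
def hamDist {M : ℕ} (x y : Fin M → Bool) : ℝ :=
  ((Finset.univ.filter fun i => x i ≠ y i).card : ℝ)

/-- The star graph `St_{n,k}`: the one-point coalescence of `n` paths of length `k`,
realized inside `ℤ^n` as the multiples `α eᵢ` with `0 ≤ α ≤ k`. -/
def St (n k : ℕ) : Type :=
  {x : Fin n → ℤ // ∃ i : Fin n, (∀ j : Fin n, j ≠ i → x j = 0) ∧ 0 ≤ x i ∧ x i ≤ (k : ℤ)}

/-- The ℓ1 metric on the star graph `St_{n,k}`. -/
def stDist {n k : ℕ} (x y : St n k) : ℝ := ∑ j, |(x.1 j : ℝ) - (y.1 j : ℝ)|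

/-- The endpoint `k eᵢ` of the `i`-th branch of the star graph. -/
def St.endpoint {n k : ℕ} (i : Fin n) : St n k :=
  ⟨fun j => if j = i then (k : ℤ) else 0, i, fun j hj => if_neg hj, by simp, by simp⟩

/-- The cycle metric on `ℤ/nℤ`. -/
def cycDist {n : ℕ} (a b : ZMod n) : ℝ := ((min ((a - b).val) ((b - a).val) : ℕ) : ℝ)

/-- The rectangular grid `G_{k,n} = ([0,k] ∩ ℤ) × ([0,n] ∩ ℤ)`. -/
def Grid2 (k n : ℕ) : Type :=
  {p : ℤ × ℤ // 0 ≤ p.1 ∧ p.1 ≤ (k : ℤ) ∧ 0 ≤ p.2 ∧ p.2 ≤ (n : ℤ)}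

/-- The ℓ1 metric on the grid `G_{k,n}`. -/
def grid2Dist {k n : ℕ} (x y : Grid2 k n) : ℝ :=
  |(x.1.1 : ℝ) - (y.1.1 : ℝ)| + |(x.1.2 : ℝ) - (y.1.2 : ℝ)|

/-- The `m`-dimensional grid `G^m({n_i}) = ∏ i, ([0, n_i] ∩ ℤ)`. -/
def GridM (m : ℕ) (n : Fin m → ℕ) : Type :=
  {p : Fin m → ℤ // ∀ i, 0 ≤ p i ∧ p i ≤ (n i : ℤ)}

/-- The ℓ1 metric on the `m`-dimensional grid. -/
def gridMDist {m : ℕ} {n : Fin m → ℕ} (x y : GridM m n) : ℝ :=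
  ∑ i, |(x.1 i : ℝ) - (y.1 i : ℝ)|


section AuxiliaryRTree

universe u

/-- Generic criterion: geodesics + separation imply ℝ-tree. -/
theorem isRTree_of_geo {T : Type*} [MetricSpace T]
    (H : ∀ P Q : T, P ≠ Q → ∃ γ : ℝ → T, γ 0 = P ∧ γ (dist P Q) = Q ∧
      (∀ u ∈ Icc (0:ℝ) (dist P Q), ∀ v ∈ Icc (0:ℝ) (dist P Q), dist (γ u) (γ v) = |u - v|) ∧
      (∀ u : ℝ, 0 < u → u < dist P Q → ∃ U V : Set T, IsOpen U ∧ IsOpen V ∧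
        (∀ w, w ≠ γ u → w ∈ U ∨ w ∈ V) ∧ U ∩ V = ∅ ∧ P ∈ U ∧ Q ∈ V)) :
    IsRTree T := by
  intro x y hxy
  obtain ⟨γ, h0, hL0, hiso, hsep⟩ := H x y hxy
  have hLpos : 0 < dist x y := dist_pos.2 hxy
  set L := dist x y with hLdef
  set G := γ '' Icc 0 L with hGdef
  have hcont : ContinuousOn γ (Icc 0 L) := by
    apply LipschitzOnWith.continuousOn (K := 1)
    intro u hu v hv
    rw [edist_dist, edist_dist, hiso u hu v hv, ← Real.dist_eq]
    simp
  have hGpre : IsPreconnected G := isPreconnected_Icc.image γ hcont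
  have hinj : InjOn γ (Icc 0 L) := by
    intro u hu v hv h
    have := hiso u hu v hv
    rw [h, dist_self] at this
    have := abs_eq_zero.1 this.symm
    linarith [this]
  have hxG : x ∈ G := ⟨0, ⟨le_refl 0, hLpos.le⟩, h0⟩
  have hyG : y ∈ G := ⟨L, ⟨hLpos.le, le_refl L⟩, hL0⟩
  have harc : IsArc x y G := by
    refine ⟨fun r => γ (r * L), ?_, ?_, by simpa using h0, by simpa using hL0, ?_⟩
    · apply hcont.comp ((continuous_mul_right L).continuousOn)
      intro r hr
      show r * L ∈ Icc 0 L
      rw [Set.mem_Icc]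
      exact ⟨mul_nonneg hr.1 hLpos.le, by nlinarith [hr.2, hr.1, hLpos]⟩
    · intro r hr r' hr' h
      have h1 : r * L ∈ Icc (0:ℝ) L := ⟨mul_nonneg hr.1 hLpos.le, by nlinarith [hr.2, hLpos]⟩
      have h2 : r' * L ∈ Icc (0:ℝ) L := ⟨mul_nonneg hr'.1 hLpos.le, by nlinarith [hr'.2, hLpos]⟩
      have := hinj h1 h2 h
      exact mul_right_cancel₀ (ne_of_gt hLpos) this
    · have : (fun r : ℝ => γ (r * L)) '' Icc 0 1 = γ '' ((fun r : ℝ => r * L) '' Icc 0 1) := by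
        rw [← Set.image_comp]; rfl
      rw [this, Set.image_mul_right_Icc zero_le_one hLpos.le]
      simp [hGdef]
  have key : ∀ A : Set T, IsArc x y A → A = G := by
    intro A hA
    obtain ⟨δ, hδc, hδi, hδ0, hδ1, hδim⟩ := hA
    have hxA : x ∈ A := by rw [← hδim]; exact ⟨0, ⟨le_refl 0, zero_le_one⟩, hδ0⟩
    have hyA : y ∈ A := by rw [← hδim]; exact ⟨1, ⟨zero_le_one, le_refl 1⟩, hδ1⟩
    have hApre : IsPreconnected A := by
      rw [← hδim]; exact isPreconnected_Icc.image δ hδc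
    have hGA : G ⊆ A := by
      rintro z ⟨u, hu, rfl⟩
      rcases eq_or_lt_of_le hu.1 with h | h
      · rw [← h, h0]; exact hxA
      rcases eq_or_lt_of_le hu.2 with h2 | h2
      · rw [h2, hL0]; exact hyA
      by_contra hzA
      obtain ⟨U, V, hU, hV, hcov, hdisj, hxU, hyV⟩ := hsep u h h2
      have hsub : A ⊆ U ∪ V := by
        intro w hw
        exact hcov w (fun hw' => hzA (hw' ▸ hw))
      obtain ⟨w, hwA, hwUV⟩ := hApre U V hU hV hsub ⟨x, hxA, hxU⟩ ⟨y, hyA, hyV⟩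
      rw [hdisj] at hwUV
      exact hwUV
    have hAG : A ⊆ G := by
      intro w hwA
      by_contra hwG
      have hw' : w ∈ δ '' Icc 0 1 := hδim.symm ▸ hwA
      obtain ⟨t, ht, rfl⟩ := hw'
      have ht0 : (0:ℝ) < t := by
        rcases eq_or_lt_of_le ht.1 with h | h
        · exact absurd (h ▸ hδ0 ▸ hxG : δ t ∈ G) hwG
        · exact h
      have ht1 : t < 1 := by
        rcases eq_or_lt_of_le ht.2 with h | h
        · exact absurd (h ▸ hδ1 ▸ hyG : δ t ∈ G) hwG
        · exact h
      set C1 := δ '' Icc t 1 with hC1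
      set C2 := δ '' Icc 0 t with hC2
      have hC1c : IsCompact C1 :=
        isCompact_Icc.image_of_continuousOn (hδc.mono (Icc_subset_Icc ht.1 le_rfl))
      have hC2c : IsCompact C2 :=
        isCompact_Icc.image_of_continuousOn (hδc.mono (Icc_subset_Icc le_rfl ht.2))
      have hO1 : IsOpen C1ᶜ := hC1c.isClosed.isOpen_compl
      have hO2 : IsOpen C2ᶜ := hC2c.isClosed.isOpen_compl
      have hGsub : G ⊆ C1ᶜ ∪ C2ᶜ := by
        intro z hz
        by_contra hzc
        simp only [Set.mem_union, Set.mem_compl_iff, not_or, not_not] at hzc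
        obtain ⟨⟨r, hr, hrz⟩, ⟨r', hr', hrz'⟩⟩ := hzc
        have hrmem : r ∈ Icc (0:ℝ) 1 := ⟨le_trans ht.1 hr.1, hr.2⟩
        have hrmem' : r' ∈ Icc (0:ℝ) 1 := ⟨hr'.1, le_trans hr'.2 ht.2⟩
        have : r = r' := hδi hrmem hrmem' (hrz.trans hrz'.symm)
        have hrt : r = t := le_antisymm (this ▸ hr'.2) hr.1
        exact hwG (hrt ▸ hrz ▸ hz)
      have hxO : x ∈ G ∩ C1ᶜ := by
        refine ⟨hxG, ?_⟩
        rintro ⟨r, hr, hrx⟩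
        have : r = 0 := hδi ⟨le_trans ht.1 hr.1, hr.2⟩ ⟨le_refl 0, zero_le_one⟩ (hrx.trans hδ0.symm)
        linarith [hr.1, this]
      have hyO : y ∈ G ∩ C2ᶜ := by
        refine ⟨hyG, ?_⟩
        rintro ⟨r, hr, hry⟩
        have : r = 1 := hδi ⟨hr.1, le_trans hr.2 ht.2⟩ ⟨zero_le_one, le_refl 1⟩ (hry.trans hδ1.symm)
        linarith [hr.2, this]
      obtain ⟨z, hzG, hz1, hz2⟩ := hGpre C1ᶜ C2ᶜ hO1 hO2 hGsub ⟨x, hxO⟩ ⟨y, hyO⟩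
      have hzA : z ∈ A := hGA hzG
      have : z ∈ C2 ∪ C1 := by
        rw [hC2, hC1, ← Set.image_union, Set.Icc_union_Icc_eq_Icc ht.1 ht.2, hδim]
        exact hzA
      rcases this with h | h
      · exact hz2 h
      · exact hz1 h
    exact hAG.antisymm hGA
  refine ⟨⟨G, harc⟩, fun A A' hA hA' => (key A hA).trans (key A' hA').symm, fun A hA => ?_⟩
  rw [key A hA]
  exact ⟨γ, h0, hL0, hiso, rfl⟩




variable {X : Type u}

/-- The labelled lamplighter ℝ-tree over `X` with height function `χ`. -/
def Tr (X : Type u) (χ : X → ℝ) : Type u :=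
  {p : ℝ × Finset X // ∀ a ∈ p.2, p.1 < χ a}

namespace Tr

variable {χ : X → ℝ}

def ht (P : Tr X χ) : ℝ := P.1.1
def cfg (P : Tr X χ) : Finset X := P.1.2

lemma ht_lt (P : Tr X χ) {a : X} (h : a ∈ P.cfg) : P.ht < χ a := P.2 a h

lemma ext' {P Q : Tr X χ} (h1 : P.ht = Q.ht) (h2 : P.cfg = Q.cfg) : P = Q := by
  apply Subtype.ext
  exact Prod.ext h1 h2

def sigSet (P Q : Tr X χ) : Finset ℝ :=
  insert P.ht (insert Q.ht ((symmDiff P.cfg Q.cfg).image χ))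

def sig (P Q : Tr X χ) : ℝ := (sigSet P Q).max' ⟨P.ht, by simp [sigSet]⟩

lemma ht_le_sig (P Q : Tr X χ) : P.ht ≤ sig P Q :=
  Finset.le_max' _ _ (by simp [sigSet])

lemma ht'_le_sig (P Q : Tr X χ) : Q.ht ≤ sig P Q :=
  Finset.le_max' _ _ (by simp [sigSet])

lemma chi_le_sig (P Q : Tr X χ) {a : X} (h : a ∈ symmDiff P.cfg Q.cfg) : χ a ≤ sig P Q :=
  Finset.le_max' _ _ (by
    simp only [sigSet, Finset.mem_insert, Finset.mem_image]
    exact Or.inr (Or.inr ⟨a, h, rfl⟩))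

lemma sig_le {P Q : Tr X χ} {c : ℝ} (h1 : P.ht ≤ c) (h2 : Q.ht ≤ c)
    (h3 : ∀ a ∈ symmDiff P.cfg Q.cfg, χ a ≤ c) : sig P Q ≤ c := by
  apply Finset.max'_le
  intro b hb
  simp only [sigSet, Finset.mem_insert, Finset.mem_image] at hb
  rcases hb with rfl | rfl | ⟨a, ha, rfl⟩
  · exact h1
  · exact h2
  · exact h3 a ha

lemma sig_cases (P Q : Tr X χ) :
    sig P Q = P.ht ∨ sig P Q = Q.ht ∨ ∃ a ∈ symmDiff P.cfg Q.cfg, sig P Q = χ a := by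
  have := Finset.max'_mem (sigSet P Q) ⟨P.ht, by simp [sigSet]⟩
  simp only [sigSet, Finset.mem_insert, Finset.mem_image] at this
  rcases this with h | h | ⟨a, ha, h⟩
  · exact Or.inl h
  · exact Or.inr (Or.inl h)
  · exact Or.inr (Or.inr ⟨a, ha, h.symm⟩)

lemma sig_comm (P Q : Tr X χ) : sig P Q = sig Q P := by
  apply le_antisymm
  · exact sig_le (ht'_le_sig Q P) (ht_le_sig Q P)
      (fun a ha => chi_le_sig Q P (by rwa [symmDiff_comm] at ha))
  · exact sig_le (ht'_le_sig P Q) (ht_le_sig P Q)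
      (fun a ha => chi_le_sig P Q (by rwa [symmDiff_comm] at ha))

lemma sig_self (P : Tr X χ) : sig P P = P.ht :=
  le_antisymm (sig_le le_rfl le_rfl (by simp)) (ht_le_sig P P)

instance : MetricSpace (Tr X χ) where
  dist P Q := sig P Q * 2 - P.ht - Q.ht
  dist_self P := by simp only [sig_self]; ring
  dist_comm P Q := by simp only [sig_comm P Q]; ring
  dist_triangle P Q R := by
    show sig P R * 2 - P.ht - R.ht ≤ (sig P Q * 2 - P.ht - Q.ht) + (sig Q R * 2 - Q.ht - R.ht)
    have key : sig P R ≤ max (sig P Q) (sig Q R) := by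
      apply sig_le
      · exact le_trans (ht_le_sig P Q) (le_max_left _ _)
      · exact le_trans (ht'_le_sig Q R) (le_max_right _ _)
      · intro a ha
        rw [Finset.mem_symmDiff] at ha
        by_cases hQ : a ∈ Q.cfg
        · rcases ha with ⟨hP, hR⟩ | ⟨hR, hP⟩
          · refine le_trans (chi_le_sig Q R ?_) (le_max_right _ _)
            rw [Finset.mem_symmDiff]; tauto
          · refine le_trans (chi_le_sig P Q ?_) (le_max_left _ _)
            rw [Finset.mem_symmDiff]; tauto
        · rcases ha with ⟨hP, hR⟩ | ⟨hR, hP⟩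
          · refine le_trans (chi_le_sig P Q ?_) (le_max_left _ _)
            rw [Finset.mem_symmDiff]; tauto
          · refine le_trans (chi_le_sig Q R ?_) (le_max_right _ _)
            rw [Finset.mem_symmDiff]; tauto
    have h1 := ht'_le_sig P Q
    have h2 := ht_le_sig Q R
    rcases le_total (sig P Q) (sig Q R) with h | h
    · rw [max_eq_right h] at key; linarith
    · rw [max_eq_left h] at key; linarith
  eq_of_dist_eq_zero := by
    intro P Q h
    change sig P Q * 2 - P.ht - Q.ht = 0 at h
    have h1 := ht_le_sig P Q
    have h2 := ht'_le_sig P Q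
    have hs : sig P Q = P.ht ∧ sig P Q = Q.ht := by constructor <;> linarith
    have hcfg : symmDiff P.cfg Q.cfg = ∅ := by
      rw [Finset.eq_empty_iff_forall_notMem]
      intro a ha
      have hc := chi_le_sig P Q ha
      rw [Finset.mem_symmDiff] at ha
      rcases ha with ⟨haP, _⟩ | ⟨haQ, _⟩
      · exact absurd (P.ht_lt haP) (by rw [← hs.1] at *; linarith)
      · exact absurd (Q.ht_lt haQ) (by rw [← hs.2] at *; linarith)
    exact ext' (by linarith [hs.1, hs.2]) (symmDiff_eq_bot.mp hcfg)

lemma dist_eq (P Q : Tr X χ) : dist P Q = sig P Q * 2 - P.ht - Q.ht := rfl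

lemma sig_sub_ht_le_dist (P Q : Tr X χ) : sig P Q - Q.ht ≤ dist P Q := by
  rw [dist_eq]; have := ht_le_sig P Q; linarith

lemma sig_sub_ht_le_dist' (P Q : Tr X χ) : sig P Q - P.ht ≤ dist P Q := by
  rw [dist_eq]; have := ht'_le_sig P Q; linarith

def vert (P : Tr X χ) (a : ℝ) : Tr X χ :=
  ⟨(a, P.cfg.filter (fun e => a < χ e)), fun e he => (Finset.mem_filter.1 he).2⟩

@[simp] lemma vert_ht (P : Tr X χ) (a : ℝ) : (vert P a).ht = a := rfl
@[simp] lemma vert_cfg (P : Tr X χ) (a : ℝ) :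
    (vert P a).cfg = P.cfg.filter (fun e => a < χ e) := rfl

lemma vert_self (P : Tr X χ) : vert P P.ht = P :=
  ext' rfl (Finset.filter_true_of_mem (fun e he => P.ht_lt he))

lemma mem_symmDiff_filter {A B : Finset X} {a b : ℝ} {e : X}
    (h : e ∈ symmDiff (A.filter (fun e => a < χ e)) (B.filter (fun e => b < χ e))) :
    (e ∈ A ∧ a < χ e ∧ (e ∉ B ∨ χ e ≤ b)) ∨ (e ∈ B ∧ b < χ e ∧ (e ∉ A ∨ χ e ≤ a)) := by
  rw [Finset.mem_symmDiff] at h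
  simp only [Finset.mem_filter, not_and, not_lt] at h
  rcases h with ⟨⟨h1, h2⟩, h3⟩ | ⟨⟨h1, h2⟩, h3⟩
  · left
    refine ⟨h1, h2, ?_⟩
    by_cases hB : e ∈ B
    · exact Or.inr (h3 hB)
    · exact Or.inl hB
  · right
    refine ⟨h1, h2, ?_⟩
    by_cases hA : e ∈ A
    · exact Or.inr (h3 hA)
    · exact Or.inl hA

lemma dist_vert_same (P : Tr X χ) {a b : ℝ} (h1 : P.ht ≤ a) (h2 : a ≤ b) :
    dist (vert P a) (vert P b) = b - a := by
  have hs : sig (vert P a) (vert P b) = b := by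
    apply le_antisymm
    · apply sig_le
      · simpa using h2
      · simp
      · intro e he
        rcases mem_symmDiff_filter he with ⟨hm, _, h⟩ | ⟨hm, hlt, h⟩
        · rcases h with h | h
          · exact absurd hm h
          · exact h
        · rcases h with h | h
          · exact absurd hm h
          · linarith
    · simpa using ht'_le_sig (vert P a) (vert P b)
  rw [dist_eq, hs]
  simp only [vert_ht]
  ring

lemma not_mem_symmDiff_trans {A B C : Finset X} {e : X}
    (h1 : e ∈ symmDiff A B) (h2 : e ∉ symmDiff C B) : e ∈ symmDiff A C := by
  rw [Finset.mem_symmDiff] at *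
  tauto

lemma sig_vert (P Q : Tr X χ) {a b : ℝ} (ha1 : P.ht ≤ a) (ha2 : a ≤ sig P Q)
    (hb1 : Q.ht ≤ b) (hb2 : b ≤ sig P Q) :
    sig (vert P a) (vert Q b) = sig P Q := by
  apply le_antisymm
  · apply sig_le
    · simpa using ha2
    · simpa using hb2
    · intro e he
      by_contra hgt
      push_neg at hgt
      have heΔ : e ∉ symmDiff P.cfg Q.cfg := by
        intro hmem
        exact absurd (chi_le_sig P Q hmem) (by linarith)
      rcases mem_symmDiff_filter he with ⟨h1, h2, h3⟩ | ⟨h1, h2, h3⟩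
      · have heQ : e ∈ Q.cfg := by
          rw [Finset.mem_symmDiff] at heΔ; tauto
        rcases h3 with h | h
        · exact h heQ
        · linarith
      · have heP : e ∈ P.cfg := by
          rw [Finset.mem_symmDiff] at heΔ; tauto
        rcases h3 with h | h
        · exact h heP
        · linarith
  · rcases sig_cases P Q with h | h | ⟨e, he, h⟩
    · have haeq : a = sig P Q := le_antisymm ha2 (h ▸ ha1)
      calc sig P Q = a := haeq.symm
      _ ≤ _ := by simpa using ht_le_sig (vert P a) (vert Q b)
    · have hbeq : b = sig P Q := le_antisymm hb2 (h ▸ hb1)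
      calc sig P Q = b := hbeq.symm
      _ ≤ _ := by simpa using ht'_le_sig (vert P a) (vert Q b)
    · rw [Finset.mem_symmDiff] at he
      rcases he with ⟨heP, heQ⟩ | ⟨heQ, heP⟩
      · by_cases hlt : a < χ e
        · refine le_trans (le_of_eq h) (chi_le_sig _ _ ?_)
          rw [Finset.mem_symmDiff]
          left
          constructor
          · simp only [vert_cfg, Finset.mem_filter]; exact ⟨heP, hlt⟩
          · simp only [vert_cfg, Finset.mem_filter]; tauto
        · push_neg at hlt
          calc sig P Q = χ e := h
          _ ≤ a := hlt
          _ ≤ _ := by simpa using ht_le_sig (vert P a) (vert Q b)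
      · by_cases hlt : b < χ e
        · refine le_trans (le_of_eq h) (chi_le_sig _ _ ?_)
          rw [Finset.mem_symmDiff]
          right
          constructor
          · simp only [vert_cfg, Finset.mem_filter]; exact ⟨heQ, hlt⟩
          · simp only [vert_cfg, Finset.mem_filter]; tauto
        · push_neg at hlt
          calc sig P Q = χ e := h
          _ ≤ b := hlt
          _ ≤ _ := by simpa using ht'_le_sig (vert P a) (vert Q b)

lemma dist_vert_mixed (P Q : Tr X χ) {a b : ℝ} (ha1 : P.ht ≤ a) (ha2 : a ≤ sig P Q)
    (hb1 : Q.ht ≤ b) (hb2 : b ≤ sig P Q) :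
    dist (vert P a) (vert Q b) = (sig P Q - a) + (sig P Q - b) := by
  rw [dist_eq, sig_vert P Q ha1 ha2 hb1 hb2]
  simp only [vert_ht]
  ring

lemma vert_apex (P Q : Tr X χ) : vert P (sig P Q) = vert Q (sig P Q) := by
  refine ext' rfl ?_
  simp only [vert_cfg]
  ext e
  simp only [Finset.mem_filter]
  constructor
  · rintro ⟨he, hlt⟩
    refine ⟨?_, hlt⟩
    by_contra heQ
    have : e ∈ symmDiff P.cfg Q.cfg := by rw [Finset.mem_symmDiff]; tauto
    exact absurd (chi_le_sig P Q this) (by linarith)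
  · rintro ⟨he, hlt⟩
    refine ⟨?_, hlt⟩
    by_contra heP
    have : e ∈ symmDiff P.cfg Q.cfg := by rw [Finset.mem_symmDiff]; tauto
    exact absurd (chi_le_sig P Q this) (by linarith)

end Tr



namespace Tr

variable {X : Type u} {χ : X → ℝ}

lemma sep_up (P Q : Tr X χ) {a : ℝ} (h1 : P.ht < a) (h2 : a ≤ sig P Q)
    (hzQ : vert P a ≠ Q) :
    ∃ U V : Set (Tr X χ), IsOpen U ∧ IsOpen V ∧
      (∀ w, w ≠ vert P a → w ∈ U ∨ w ∈ V) ∧ U ∩ V = ∅ ∧ P ∈ U ∧ Q ∈ V := by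
  set z := vert P a with hz
  set U : Set (Tr X χ) := {w | w.ht < a ∧ ∀ e ∈ symmDiff w.cfg P.cfg, χ e < a} with hU
  set V : Set (Tr X χ) := {w | w ≠ z ∧ w ∉ U} with hV
  have hUopen : IsOpen U := by
    rw [Metric.isOpen_iff]
    intro w hw
    refine ⟨a - w.ht, by linarith [hw.1], ?_⟩
    intro w' hw'
    rw [Metric.mem_ball] at hw'
    have hds : sig w' w - w.ht ≤ dist w' w := sig_sub_ht_le_dist w' w
    have hsig : sig w' w < a := by linarith
    constructor
    · calc w'.ht ≤ sig w' w := ht_le_sig w' w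
      _ < a := hsig
    · intro e he
      by_cases hΔ : e ∈ symmDiff w'.cfg w.cfg
      · calc χ e ≤ sig w' w := chi_le_sig w' w hΔ
        _ < a := hsig
      · exact hw.2 e (by
          rw [Finset.mem_symmDiff] at he hΔ ⊢
          tauto)
  refine ⟨U, V, hUopen, ?_, ?_, ?_, ?_, ?_⟩
  · -- V open
    rw [Metric.isOpen_iff]
    rintro w ⟨hwz, hwU⟩
    by_cases hht : a < w.ht
    · refine ⟨w.ht - a, by linarith, ?_⟩
      intro w' hw'
      rw [Metric.mem_ball] at hw'
      have hds : sig w' w - w'.ht ≤ dist w' w := sig_sub_ht_le_dist' w' w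
      have hwle : w.ht ≤ sig w' w := ht'_le_sig w' w
      have hgt : a < w'.ht := by linarith
      constructor
      · intro hww
        rw [hww] at hgt
        simp [hz] at hgt
      · intro hU'
        exact absurd hgt (not_lt.2 (le_of_lt hU'.1))
    · push_neg at hht
      rcases eq_or_lt_of_le hht with heq | hlt
      · -- w.ht = a, w ≠ z, so cfgs differ
        have hcfg : w.cfg ≠ z.cfg := by
          intro h
          exact hwz (ext' (by simp [hz, heq]) h)
        have hne : symmDiff w.cfg z.cfg ≠ ∅ := by
          intro h
          exact hcfg (symmDiff_eq_bot.mp h)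
        obtain ⟨e, he⟩ := Finset.nonempty_iff_ne_empty.2 hne
        have hchi : a < χ e := by
          rw [Finset.mem_symmDiff] at he
          rcases he with ⟨hew, _⟩ | ⟨hez, _⟩
          · rw [← heq]; exact w.ht_lt hew
          · have := z.ht_lt hez
            simpa [hz] using this
        have heP : e ∈ symmDiff w.cfg P.cfg := by
          rw [Finset.mem_symmDiff] at he ⊢
          have hfilter : e ∈ z.cfg ↔ e ∈ P.cfg := by
            simp only [hz, vert_cfg, Finset.mem_filter]
            exact ⟨fun h => h.1, fun h => ⟨h, hchi⟩⟩
          tauto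
        refine ⟨χ e - a, by linarith, ?_⟩
        intro w' hw'
        rw [Metric.mem_ball] at hw'
        constructor
        · intro hww
          rw [hww] at hw'
          have hez : e ∈ symmDiff w.cfg z.cfg := he
          have : χ e ≤ sig z w := chi_le_sig z w (by rwa [symmDiff_comm] at hez)
          have hds : sig z w - z.ht ≤ dist z w := sig_sub_ht_le_dist' z w
          have hzh : z.ht = a := by simp [hz]
          linarith
        · intro hU'
          have heP' : e ∉ symmDiff w'.cfg P.cfg := by
            intro hmem
            exact absurd (hU'.2 e hmem) (by linarith)
          have heww : e ∈ symmDiff w'.cfg w.cfg := by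
            rw [Finset.mem_symmDiff] at heP heP' ⊢
            tauto
          have : χ e ≤ sig w' w := chi_le_sig w' w heww
          have hds : sig w' w - w.ht ≤ dist w' w := sig_sub_ht_le_dist w' w
          rw [heq] at *
          linarith [hU'.1]
      · -- w.ht < a, w ∉ U gives a bad element e
        have hbad : ∃ e ∈ symmDiff w.cfg P.cfg, a ≤ χ e := by
          by_contra hc
          push_neg at hc
          exact hwU ⟨hlt, hc⟩
        obtain ⟨e, he, hche⟩ := hbad
        refine ⟨a - w.ht, by linarith, ?_⟩
        intro w' hw'
        rw [Metric.mem_ball] at hw'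
        constructor
        · intro hww
          rw [hww] at hw'
          have hds : sig z w - w.ht ≤ dist z w := sig_sub_ht_le_dist z w
          have hle : z.ht ≤ sig z w := ht_le_sig z w
          have hzh : z.ht = a := by simp [hz]
          linarith
        · intro hU'
          have heP' : e ∉ symmDiff w'.cfg P.cfg := by
            intro hmem
            exact absurd (hU'.2 e hmem) (by linarith)
          have heww : e ∈ symmDiff w'.cfg w.cfg := by
            rw [Finset.mem_symmDiff] at he heP' ⊢
            tauto
          have : χ e ≤ sig w' w := chi_le_sig w' w heww
          have hds : sig w' w - w.ht ≤ dist w' w := sig_sub_ht_le_dist w' w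
          linarith [hU'.1]
  · intro w hw
    by_cases hU' : w ∈ U
    · exact Or.inl hU'
    · exact Or.inr ⟨hw, hU'⟩
  · ext w
    simp only [Set.mem_inter_iff, Set.mem_empty_iff_false, iff_false, not_and]
    intro hwU hwV
    exact hwV.2 hwU
  · exact ⟨h1, by simp⟩
  · refine ⟨fun h => hzQ h.symm, ?_⟩
    intro hQU
    rcases sig_cases P Q with h | h | ⟨e, he, h⟩
    · linarith [h2, h.le]
    · linarith [h2, hQU.1]
    · have : χ e < a := hQU.2 e (by rwa [symmDiff_comm] at he)
      linarith [h2, h.ge]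

theorem geo (P Q : Tr X χ) (hPQ : P ≠ Q) :
    ∃ γ : ℝ → Tr X χ, γ 0 = P ∧ γ (dist P Q) = Q ∧
      (∀ u ∈ Icc (0:ℝ) (dist P Q), ∀ v ∈ Icc (0:ℝ) (dist P Q),
        dist (γ u) (γ v) = |u - v|) ∧
      (∀ u : ℝ, 0 < u → u < dist P Q → ∃ U V : Set (Tr X χ), IsOpen U ∧ IsOpen V ∧
        (∀ w, w ≠ γ u → w ∈ U ∨ w ∈ V) ∧ U ∩ V = ∅ ∧ P ∈ U ∧ Q ∈ V) := by
  set s := sig P Q with hs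
  set L := dist P Q with hL
  have hL_eq : L = s * 2 - P.ht - Q.ht := dist_eq P Q
  have hts : P.ht ≤ s := ht_le_sig P Q
  have hts' : Q.ht ≤ s := ht'_le_sig P Q
  set γ : ℝ → Tr X χ := fun u => if u ≤ s - P.ht then vert P (P.ht + u)
    else vert Q (2 * s - P.ht - u) with hγ
  have hγ0 : γ 0 = P := by
    simp only [hγ]
    rw [if_pos (by linarith)]
    simpa using vert_self P
  have hγL : γ L = Q := by
    simp only [hγ]
    by_cases hQ : L ≤ s - P.ht
    · rw [if_pos hQ]
      have hseq : s = Q.ht := by rw [hL_eq] at hQ; linarith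
      have h1 : P.ht + L = s := by rw [hL_eq]; linarith
      rw [h1, hs, vert_apex P Q, ← hs, hseq, vert_self]
    · rw [if_neg hQ]
      have h1 : 2 * s - P.ht - L = Q.ht := by rw [hL_eq]; ring
      rw [h1, vert_self]
  have hmain : ∀ u ∈ Icc (0:ℝ) L, ∀ v ∈ Icc (0:ℝ) L, u ≤ v →
      dist (γ u) (γ v) = v - u := by
    intro u hu v hv huv
    simp only [hγ]
    by_cases hub : u ≤ s - P.ht <;> by_cases hvb : v ≤ s - P.ht
    · rw [if_pos hub, if_pos hvb, dist_vert_same P (by linarith [hu.1]) (by linarith)]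
      ring
    · rw [if_pos hub, if_neg hvb]
      push_neg at hvb
      have hbv : 2 * s - P.ht - v ≤ s := by linarith
      have hbv' : Q.ht ≤ 2 * s - P.ht - v := by
        rw [hL_eq] at hv; linarith [hv.2]
      rw [dist_vert_mixed P Q (by linarith [hu.1]) (by linarith) hbv' hbv]
      ring
    · push_neg at hub; linarith
    · rw [if_neg hub, if_neg hvb]
      push_neg at hub hvb
      have h1 : Q.ht ≤ 2 * s - P.ht - v := by rw [hL_eq] at hv; linarith [hv.2]
      have h2 : 2 * s - P.ht - v ≤ 2 * s - P.ht - u := by linarith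
      rw [dist_comm, dist_vert_same Q h1 h2]
      ring
  refine ⟨γ, hγ0, hγL, ?_, ?_⟩
  · intro u hu v hv
    rcases le_total u v with h | h
    · rw [hmain u hu v hv h, abs_of_nonpos (by linarith)]; ring
    · rw [dist_comm, hmain v hv u hu h, abs_of_nonneg (by linarith)]
  · intro u hu0 huL
    by_cases hub : u ≤ s - P.ht
    · have hγu : γ u = vert P (P.ht + u) := by simp only [hγ]; rw [if_pos hub]
      have hzQ : vert P (P.ht + u) ≠ Q := by
        intro h
        have := hmain u ⟨hu0.le, huL.le⟩ L ⟨(by linarith : (0:ℝ) ≤ L), le_rfl⟩ huL.le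
        rw [hγL] at this
        rw [hγu] at this
        rw [h, dist_self] at this
        linarith
      obtain ⟨U, V, h1, h2, h3, h4, h5, h6⟩ :=
        sep_up P Q (a := P.ht + u) (by linarith) (by linarith) hzQ
      exact ⟨U, V, h1, h2, by rw [hγu]; exact h3, h4, h5, h6⟩
    · push_neg at hub
      have hγu : γ u = vert Q (2 * s - P.ht - u) := by
        simp only [hγ]; rw [if_neg (not_le.2 hub)]
      have hb1 : Q.ht < 2 * s - P.ht - u := by rw [hL_eq] at huL; linarith
      have hb2 : 2 * s - P.ht - u ≤ sig Q P := by rw [← sig_comm]; linarith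
      have hzP : vert Q (2 * s - P.ht - u) ≠ P := by
        intro h
        have := hmain 0 ⟨le_rfl, by linarith⟩ u ⟨hu0.le, huL.le⟩ hu0.le
        rw [hγ0, hγu, h, dist_self] at this
        linarith
      obtain ⟨U, V, h1, h2, h3, h4, h5, h6⟩ :=
        sep_up Q P (a := 2 * s - P.ht - u) hb1 hb2 hzP
      refine ⟨V, U, h2, h1, ?_, ?_, h6, h5⟩
      · intro w hw
        exact (h3 w (by rwa [hγu] at hw)).symm
      · rw [Set.inter_comm]; exact h4
  
theorem isRTree (χ : X → ℝ) : IsRTree (Tr X χ) :=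
  isRTree_of_geo (fun P Q hPQ => geo P Q hPQ)

end Tr

-- pathLength lemmas

@[simp] lemma pathLength_nil (d : X → X → ℝ) : pathLength d [] = 0 := rfl
@[simp] lemma pathLength_single (d : X → X → ℝ) (x : X) : pathLength d [x] = 0 := rfl
lemma pathLength_cons₂ (d : X → X → ℝ) (x y : X) (l : List X) :
    pathLength d (x :: y :: l) = d x y + pathLength d (y :: l) := rfl

lemma pathLength_nonneg {d : X → X → ℝ} (hd : ∀ a b, 0 ≤ d a b) :
    ∀ l : List X, 0 ≤ pathLength d l := by
  intro l
  induction l with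
  | nil => simp
  | cons x t ih =>
    cases t with
    | nil => simp
    | cons y r =>
      rw [pathLength_cons₂]
      have := hd x y
      linarith

lemma pathLength_mono {d1 d2 : X → X → ℝ} (h : ∀ a b, d1 a b ≤ d2 a b) :
    ∀ l : List X, pathLength d1 l ≤ pathLength d2 l := by
  intro l
  induction l with
  | nil => simp
  | cons x t ih =>
    cases t with
    | nil => simp
    | cons y r =>
      rw [pathLength_cons₂, pathLength_cons₂]
      exact add_le_add (h x y) ih

lemma pathLength_sum {ι : Type*} (s : Finset ι) (e : ι → X → X → ℝ) :
    ∀ l : List X, pathLength (fun a b => ∑ i ∈ s, e i a b) l = ∑ i ∈ s, pathLength (e i) l := by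
  intro l
  induction l with
  | nil => simp
  | cons x t ih =>
    cases t with
    | nil => simp
    | cons y r =>
      simp only [pathLength_cons₂]
      rw [Finset.sum_add_distrib, ih]

lemma pathLength_head (χ : X → ℝ) :
    ∀ (t : List X) (x u : X), u ∈ x :: t →
      |χ x - χ u| ≤ pathLength (fun a b => |χ a - χ b|) (x :: t) := by
  intro t
  induction t with
  | nil =>
    intro x u hu
    simp at hu
    simp [hu]
  | cons y r ih =>
    intro x u hu
    rw [pathLength_cons₂]
    rcases List.mem_cons.1 hu with rfl | hu'
    · have h1 : (0:ℝ) ≤ |χ u - χ y| := abs_nonneg _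
      have h2 := pathLength_nonneg (d := fun a b => |χ a - χ b|) (fun a b => abs_nonneg _) (y :: r)
      simp
      linarith
    · calc |χ x - χ u| ≤ |χ x - χ y| + |χ y - χ u| := abs_sub_le _ _ _
      _ ≤ |χ x - χ y| + pathLength (fun a b => |χ a - χ b|) (y :: r) :=
          add_le_add (le_refl _) (ih y u hu')

lemma pathLength_tail_le (χ : X → ℝ) (x : X) (t : List X) :
    pathLength (fun a b => |χ a - χ b|) t ≤ pathLength (fun a b => |χ a - χ b|) (x :: t) := by
  cases t with
  | nil => simp
  | cons y r =>
    rw [pathLength_cons₂]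
    have := abs_nonneg (χ x - χ y)
    linarith

lemma pathLength_pair (χ : X → ℝ) :
    ∀ (l : List X) (u v : X), u ∈ l → v ∈ l →
      |χ u - χ v| ≤ pathLength (fun a b => |χ a - χ b|) l := by
  intro l
  induction l with
  | nil => intro u v hu; simp at hu
  | cons x t ih =>
    intro u v hu hv
    rcases List.mem_cons.1 hu with rfl | hu'
    · exact pathLength_head χ t u v hv
    · rcases List.mem_cons.1 hv with rfl | hv'
      · rw [abs_sub_comm]
        exact pathLength_head χ t v u (List.mem_cons.2 (Or.inr hu'))
      · exact le_trans (ih u v hu' hv') (pathLength_tail_le χ x t)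

-- the finite "support" set of a pair of configurations

variable [MetricSpace X] [Fintype X]

def Sfin (p q : Lamp X) : Finset X := {p.2, q.2} ∪ symmDiff p.1 q.1

lemma self_mem_Sfin (p q : Lamp X) : p.2 ∈ Sfin p q := by
  simp [Sfin]

lemma self_mem_Sfin' (p q : Lamp X) : q.2 ∈ Sfin p q := by
  simp [Sfin]

lemma Sfin_nonempty (p q : Lamp X) : (Sfin p q).Nonempty := ⟨p.2, self_mem_Sfin p q⟩

lemma mem_Sfin_of_symmDiff {p q : Lamp X} {a : X} (h : a ∈ symmDiff p.1 q.1) :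
    a ∈ Sfin p q := by
  simp only [Sfin, Finset.mem_union]
  exact Or.inr h

lemma sd_eq_symmDiff (p q : Lamp X) : sd p q = ↑(symmDiff p.1 q.1) := by
  ext a
  simp only [sd, Set.mem_union, Set.mem_diff, Finset.coe_sort_coe, Finset.mem_coe,
    Finset.mem_symmDiff]

lemma coe_Sfin (p q : Lamp X) : ({p.2, q.2} ∪ sd p q : Set X) = ↑(Sfin p q) := by
  rw [sd_eq_symmDiff]
  ext a
  simp only [Sfin, Set.mem_union, Set.mem_insert_iff, Set.mem_singleton_iff, Finset.coe_union,
    Finset.mem_coe, Finset.mem_union, Finset.coe_insert, Finset.coe_singleton]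

-- the sum of coordinate diameters

variable {m' : ℕ}

def Sigd (ψ : Fin m' → X → ℝ) (p q : Lamp X) : ℝ :=
  ∑ i, ((Sfin p q).sup' (Sfin_nonempty p q) (ψ i) - (Sfin p q).inf' (Sfin_nonempty p q) (ψ i))

lemma term_nonneg (ψ : Fin m' → X → ℝ) (p q : Lamp X) (i : Fin m') :
    0 ≤ (Sfin p q).sup' (Sfin_nonempty p q) (ψ i) - (Sfin p q).inf' (Sfin_nonempty p q) (ψ i) := by
  have h1 := Finset.inf'_le (f := ψ i) (self_mem_Sfin p q)
  have h2 := Finset.le_sup' (f := ψ i) (b := p.2) (self_mem_Sfin p q)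
  linarith

lemma Sigd_nonneg (ψ : Fin m' → X → ℝ) (p q : Lamp X) : 0 ≤ Sigd ψ p q :=
  Finset.sum_nonneg (fun i _ => term_nonneg ψ p q i)

lemma abs_le_term (ψ : Fin m' → X → ℝ) (p q : Lamp X) (i : Fin m') {u v : X}
    (hu : u ∈ Sfin p q) (hv : v ∈ Sfin p q) :
    |ψ i u - ψ i v| ≤ (Sfin p q).sup' (Sfin_nonempty p q) (ψ i) -
      (Sfin p q).inf' (Sfin_nonempty p q) (ψ i) := by
  rw [abs_le]
  constructor
  · have h1 := Finset.inf'_le (f := ψ i) hu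
    have h2 := Finset.le_sup' (f := ψ i) (b := v) hv
    linarith
  · have h1 := Finset.inf'_le (f := ψ i) hv
    have h2 := Finset.le_sup' (f := ψ i) (b := u) hu
    linarith

lemma sum_abs_le_Sigd (ψ : Fin m' → X → ℝ) (p q : Lamp X) {u v : X}
    (hu : u ∈ Sfin p q) (hv : v ∈ Sfin p q) :
    (∑ i, |ψ i u - ψ i v|) ≤ Sigd ψ p q :=
  Finset.sum_le_sum (fun i _ => abs_le_term ψ p q i hu hv)

-- the TSP admissible set

lemma TSP_set_nonempty (p q : Lamp X) :
    { s : ℝ | ∃ l : List X, l.head? = some p.2 ∧ l.getLast? = some q.2 ∧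
      (∀ a ∈ sd p q, a ∈ l) ∧ s = pathLength (dist : X → X → ℝ) l }.Nonempty := by
  refine ⟨pathLength dist (p.2 :: ((symmDiff p.1 q.1).toList ++ [q.2])),
    p.2 :: ((symmDiff p.1 q.1).toList ++ [q.2]), rfl, ?_, ?_, rfl⟩
  · rw [show p.2 :: ((symmDiff p.1 q.1).toList ++ [q.2]) =
      (p.2 :: (symmDiff p.1 q.1).toList) ++ [q.2] from rfl]
    exact List.getLast?_concat
  · intro a ha
    rw [sd_eq_symmDiff] at ha
    simp only [Finset.mem_coe] at ha
    simp [Finset.mem_toList, ha]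

lemma TSP_nonneg (p q : Lamp X) : 0 ≤ TSP (dist : X → X → ℝ) p q := by
  apply le_csInf (TSP_set_nonempty p q)
  rintro s ⟨l, _, _, _, rfl⟩
  exact pathLength_nonneg (fun a b => dist_nonneg) l

lemma Sigd_le_TSP (ψ : Fin m' → X → ℝ)
    (hlip : ∀ x y : X, (∑ i, |ψ i x - ψ i y|) ≤ dist x y) (p q : Lamp X) :
    Sigd ψ p q ≤ TSP (dist : X → X → ℝ) p q := by
  apply le_csInf (TSP_set_nonempty p q)
  rintro s ⟨l, hh, hl, hcov, rfl⟩
  have hmem : ∀ a ∈ Sfin p q, a ∈ l := by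
    intro a ha
    simp only [Sfin, Finset.mem_union, Finset.mem_insert, Finset.mem_singleton] at ha
    rcases ha with (rfl | rfl) | ha
    · exact List.mem_of_mem_head? (by rw [hh]; rfl)
    · exact List.mem_of_mem_getLast? (by rw [hl]; rfl)
    · apply hcov
      rw [sd_eq_symmDiff]
      exact Finset.mem_coe.2 ha
  have step1 : Sigd ψ p q ≤ ∑ i, pathLength (fun a b => |ψ i a - ψ i b|) l := by
    apply Finset.sum_le_sum
    intro i _
    obtain ⟨u, hu, hus⟩ := Finset.exists_mem_eq_sup' (Sfin_nonempty p q) (ψ i)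
    obtain ⟨v, hv, hvs⟩ := Finset.exists_mem_eq_inf' (Sfin_nonempty p q) (ψ i)
    rw [hus, hvs]
    calc ψ i u - ψ i v ≤ |ψ i u - ψ i v| := le_abs_self _
    _ ≤ _ := pathLength_pair (ψ i) l u v (hmem u hu) (hmem v hv)
  calc Sigd ψ p q ≤ ∑ i, pathLength (fun a b => |ψ i a - ψ i b|) l := step1
  _ = pathLength (fun a b => ∑ i, |ψ i a - ψ i b|) l := (pathLength_sum _ _ l).symm
  _ ≤ pathLength dist l := pathLength_mono hlip l

lemma TSCP_le_Sigd (ψ : Fin m' → X → ℝ) {D : ℝ} (hD : 0 < D)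
    (hlow : ∀ x y : X, dist x y / D ≤ ∑ i, |ψ i x - ψ i y|) (p q : Lamp X) :
    TSCP (dist : X → X → ℝ) p q ≤ D * Sigd ψ p q := by
  have hSig := Sigd_nonneg ψ p q
  have hbound : ediamD (dist : X → X → ℝ) ({p.2, q.2} ∪ sd p q) ≤
      ENNReal.ofReal (D * Sigd ψ p q) := by
    rw [coe_Sfin]
    apply iSup₂_le
    intro u hu
    apply iSup₂_le
    intro v hv
    apply ENNReal.ofReal_le_ofReal
    have h1 := hlow u v
    have h2 := sum_abs_le_Sigd ψ p q (Finset.mem_coe.1 hu) (Finset.mem_coe.1 hv)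
    rw [div_le_iff₀ hD] at h1
    calc dist u v ≤ (∑ i, |ψ i u - ψ i v|) * D := h1
    _ ≤ Sigd ψ p q * D := by nlinarith
    _ = D * Sigd ψ p q := mul_comm _ _
  calc TSCP (dist : X → X → ℝ) p q ≤ (ENNReal.ofReal (D * Sigd ψ p q)).toReal :=
    ENNReal.toReal_mono ENNReal.ofReal_ne_top hbound
  _ = D * Sigd ψ p q := ENNReal.toReal_ofReal (by positivity)



variable {X : Type u} [MetricSpace X] [Fintype X]

def upPt (χ : X → ℝ) (p : Lamp X) : Tr X χ :=
  ⟨(χ p.2, p.1.filter (fun a => χ p.2 < χ a)), fun a ha => (Finset.mem_filter.1 ha).2⟩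

lemma upPt_ht (χ : X → ℝ) (p : Lamp X) : (upPt χ p).ht = χ p.2 := rfl

lemma sig_upPt (χ : X → ℝ) (p q : Lamp X) :
    Tr.sig (upPt χ p) (upPt χ q) = (Sfin p q).sup' (Sfin_nonempty p q) χ := by
  apply le_antisymm
  · apply Tr.sig_le
    · exact Finset.le_sup' χ (self_mem_Sfin p q)
    · exact Finset.le_sup' χ (self_mem_Sfin' p q)
    · intro e he
      rcases Tr.mem_symmDiff_filter he with ⟨h1, h2, h3⟩ | ⟨h1, h2, h3⟩
      · rcases h3 with h3 | h3
        · refine Finset.le_sup' χ (mem_Sfin_of_symmDiff ?_)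
          rw [Finset.mem_symmDiff]; tauto
        · exact le_trans h3 (Finset.le_sup' χ (self_mem_Sfin' p q))
      · rcases h3 with h3 | h3
        · refine Finset.le_sup' χ (mem_Sfin_of_symmDiff ?_)
          rw [Finset.mem_symmDiff]; tauto
        · exact le_trans h3 (Finset.le_sup' χ (self_mem_Sfin p q))
  · obtain ⟨w, hw, hws⟩ := Finset.exists_mem_eq_sup' (Sfin_nonempty p q) χ
    rw [hws]
    simp only [Sfin, Finset.mem_union, Finset.mem_insert, Finset.mem_singleton] at hw
    rcases hw with (rfl | rfl) | hw
    · have := Tr.ht_le_sig (upPt χ p) (upPt χ q)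
      rwa [upPt_ht] at this
    · have := Tr.ht'_le_sig (upPt χ p) (upPt χ q)
      rwa [upPt_ht] at this
    · rw [Finset.mem_symmDiff] at hw
      rcases hw with ⟨hwp, hwq⟩ | ⟨hwq, hwp⟩
      · by_cases hlt : χ p.2 < χ w
        · refine Tr.chi_le_sig _ _ ?_
          rw [Finset.mem_symmDiff]
          left
          constructor
          · simp only [upPt, Tr.cfg, Finset.mem_filter]; exact ⟨hwp, hlt⟩
          · simp only [upPt, Tr.cfg, Finset.mem_filter]; tauto
        · push_neg at hlt
          have := Tr.ht_le_sig (upPt χ p) (upPt χ q)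
          rw [upPt_ht] at this
          exact le_trans hlt this
      · by_cases hlt : χ q.2 < χ w
        · refine Tr.chi_le_sig _ _ ?_
          rw [Finset.mem_symmDiff]
          right
          constructor
          · simp only [upPt, Tr.cfg, Finset.mem_filter]; exact ⟨hwq, hlt⟩
          · simp only [upPt, Tr.cfg, Finset.mem_filter]; tauto
        · push_neg at hlt
          have := Tr.ht'_le_sig (upPt χ p) (upPt χ q)
          rw [upPt_ht] at this
          exact le_trans hlt this

lemma dist_upPt (χ : X → ℝ) (p q : Lamp X) :
    dist (upPt χ p) (upPt χ q) =
      ((Sfin p q).sup' (Sfin_nonempty p q) χ) * 2 - χ p.2 - χ q.2 := by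
  rw [Tr.dist_eq, sig_upPt]
  rfl

def starPt (χ : X → ℝ) (h0 : ∀ a, χ a = 0) (p : Lamp X) : Tr X χ :=
  ⟨(-(1/2 : ℝ), p.1), fun a _ => by rw [h0 a]; norm_num⟩

lemma dist_starPt (χ : X → ℝ) (h0 : ∀ a, χ a = 0) (p q : Lamp X) :
    dist (starPt χ h0 p) (starPt χ h0 q) = rho p q := by
  unfold rho
  by_cases hAB : p.1 = q.1
  · rw [if_pos hAB]
    have : starPt χ h0 p = starPt χ h0 q := Tr.ext' rfl hAB
    rw [this, dist_self]
  · rw [if_neg hAB]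
    have hsig : Tr.sig (starPt χ h0 p) (starPt χ h0 q) = 0 := by
      apply le_antisymm
      · apply Tr.sig_le
        · show -(1/2 : ℝ) ≤ 0; norm_num
        · show -(1/2 : ℝ) ≤ 0; norm_num
        · intro a _; rw [h0 a]
      · have hne : symmDiff (starPt χ h0 p).cfg (starPt χ h0 q).cfg ≠ ∅ := by
          intro h
          exact hAB (symmDiff_eq_bot.mp h)
        obtain ⟨e, he⟩ := Finset.nonempty_iff_ne_empty.2 hne
        have := Tr.chi_le_sig _ _ he
        rw [h0 e] at this
        exact this
    rw [Tr.dist_eq, hsig]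
    show (0:ℝ) * 2 - (-(1/2)) - (-(1/2)) = 1
    norm_num

def zeroPt (χ : X → ℝ) : Tr X χ := ⟨(0, ∅), by simp⟩

theorem main_embed (K D : ℝ) (hK : 1 ≤ K) (hD : 1 ≤ D)
    (heff : TSPEfficient (dist : X → X → ℝ) K) (m' : ℕ) (ψ : Fin m' → X → ℝ)
    (hlip : ∀ x y : X, (∑ i, |ψ i x - ψ i y|) ≤ dist x y)
    (hlow : ∀ x y : X, dist x y / D ≤ ∑ i, |ψ i x - ψ i y|)
    (N : ℕ) (hN : 2 * m' + 1 ≤ N) :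
    ∃ (T : Fin N → Type u) (I : ∀ i, MetricSpace (T i)),
      (∀ i, @IsRTree (T i) (I i)) ∧
      ∃ f : Lamp X → ∀ i, T i,
        BiLipWith (dLa (dist : X → X → ℝ)) (piL1Dist I) (6 * K * D) f := by
  classical
  have hKpos : (0:ℝ) < K := by linarith
  have hDpos : (0:ℝ) < D := by linarith
  have hKD : (0:ℝ) < K * D := by positivity
  have hKD1 : (1:ℝ) ≤ K * D := by nlinarith
  set Ψ : Fin N → X → ℝ := fun i =>
    if h : (i : ℕ) < m' then ψ ⟨(i : ℕ), h⟩
    else if h2 : (i : ℕ) < 2 * m' then fun x => - ψ ⟨(i : ℕ) - m', by omega⟩ x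
    else fun _ => 0 with hΨ
  have hΨ0 : ∀ i : Fin N, ¬((i : ℕ) < 2 * m') → ∀ a, Ψ i a = 0 := by
    intro i hi a
    simp only [hΨ]
    rw [dif_neg (by omega : ¬ ((i:ℕ) < m')), dif_neg hi]
  refine ⟨fun i => Tr X (Ψ i), fun i => inferInstance, fun i => Tr.isRTree (Ψ i), ?_⟩
  set f : Lamp X → ∀ i : Fin N, Tr X (Ψ i) := fun p i =>
    if h : (i : ℕ) < 2 * m' then upPt (Ψ i) p
    else if h2 : (i : ℕ) = 2 * m' then starPt (Ψ i) (hΨ0 i (by omega)) p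
    else zeroPt (Ψ i) with hf
  have hpi : ∀ g h : (∀ i : Fin N, Tr X (Ψ i)),
      piL1Dist (fun i => inferInstance) g h = ∑ i, dist (g i) (h i) := fun g h => rfl
  have hdist : ∀ p q : Lamp X,
      piL1Dist (fun i => inferInstance) (f p) (f q) = 2 * Sigd ψ p q + rho p q := by
    intro p q
    set F : ℕ → ℝ := fun j =>
      if hj : j < N then dist (f p ⟨j, hj⟩) (f q ⟨j, hj⟩) else 0 with hF
    have h0 : piL1Dist (fun i => inferInstance) (f p) (f q) = ∑ j ∈ Finset.range N, F j := by
      rw [hpi, ← Fin.sum_univ_eq_sum_range F N]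
      apply Finset.sum_congr rfl
      intro i _
      simp only [hF]
      rw [dif_pos i.isLt]
    -- region A : j < m'
    have hFA : ∀ j (hj : j < m'), F j =
        ((Sfin p q).sup' (Sfin_nonempty p q) (ψ ⟨j, hj⟩)) * 2
          - ψ ⟨j, hj⟩ p.2 - ψ ⟨j, hj⟩ q.2 := by
      intro j hj
      have hjN : j < N := by omega
      have hj2 : ((⟨j, hjN⟩ : Fin N) : ℕ) < 2 * m' := by show j < 2 * m'; omega
      have hΨj : Ψ ⟨j, hjN⟩ = ψ ⟨j, hj⟩ := by
        simp only [hΨ]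
        rw [dif_pos (show ((⟨j, hjN⟩ : Fin N) : ℕ) < m' from hj)]
      simp only [hF]
      rw [dif_pos hjN]
      have hfp : f p ⟨j, hjN⟩ = upPt (Ψ ⟨j, hjN⟩) p := by
        simp only [hf]; rw [dif_pos hj2]
      have hfq : f q ⟨j, hjN⟩ = upPt (Ψ ⟨j, hjN⟩) q := by
        simp only [hf]; rw [dif_pos hj2]
      rw [hfp, hfq, dist_upPt, hΨj]
    -- region B : m' ≤ j < 2m'
    have hFB : ∀ j (hj : j < m'), F (m' + j) =
        (-(Sfin p q).inf' (Sfin_nonempty p q) (ψ ⟨j, hj⟩)) * 2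
          + ψ ⟨j, hj⟩ p.2 + ψ ⟨j, hj⟩ q.2 := by
      intro j hj
      have hjN : m' + j < N := by omega
      have hj2 : ((⟨m' + j, hjN⟩ : Fin N) : ℕ) < 2 * m' := by show m' + j < 2 * m'; omega
      have hΨj : Ψ ⟨m' + j, hjN⟩ = fun x => - ψ ⟨j, hj⟩ x := by
        simp only [hΨ]
        rw [dif_neg (show ¬ ((⟨m' + j, hjN⟩ : Fin N) : ℕ) < m' by show ¬ (m' + j < m'); omega),
          dif_pos hj2]
        simp only [show ((⟨m' + j, hjN⟩ : Fin N) : ℕ) - m' = j from by show m' + j - m' = j; omega]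
      simp only [hF]
      rw [dif_pos hjN]
      have hfp : f p ⟨m' + j, hjN⟩ = upPt (Ψ ⟨m' + j, hjN⟩) p := by
        simp only [hf]; rw [dif_pos hj2]
      have hfq : f q ⟨m' + j, hjN⟩ = upPt (Ψ ⟨m' + j, hjN⟩) q := by
        simp only [hf]; rw [dif_pos hj2]
      rw [hfp, hfq, dist_upPt, hΨj]
      have hsup : (Sfin p q).sup' (Sfin_nonempty p q) (fun x => - ψ ⟨j, hj⟩ x)
          = - (Sfin p q).inf' (Sfin_nonempty p q) (ψ ⟨j, hj⟩) := by
        apply le_antisymm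
        · apply Finset.sup'_le
          intro b hb
          have := Finset.inf'_le (f := ψ ⟨j, hj⟩) hb
          linarith
        · obtain ⟨w, hw, hws⟩ := Finset.exists_mem_eq_inf' (Sfin_nonempty p q) (ψ ⟨j, hj⟩)
          rw [hws]
          exact Finset.le_sup' (f := fun x => - ψ ⟨j, hj⟩ x) hw
      rw [hsup]
      ring
    -- region C
    have hFC : F (2 * m') = rho p q := by
      have hjN : 2 * m' < N := by omega
      simp only [hF]
      rw [dif_pos hjN]
      have hj2 : ¬ ((⟨2 * m', hjN⟩ : Fin N) : ℕ) < 2 * m' := by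
        show ¬ (2 * m' < 2 * m'); omega
      simp only [hf]
      rw [dif_neg hj2, dif_neg hj2]
      rw [dif_pos trivial, dif_pos trivial]
      rw [dist_starPt]
    have hFzero : ∀ j, 2 * m' < j → j < N → F j = 0 := by
      intro j h1 h2
      simp only [hF]
      rw [dif_pos h2]
      have hj2 : ¬ ((⟨j, h2⟩ : Fin N) : ℕ) < 2 * m' := by show ¬ (j < 2 * m'); omega
      have hj3 : ¬ ((⟨j, h2⟩ : Fin N) : ℕ) = 2 * m' := by show ¬ (j = 2 * m'); omega
      have hfp : f p ⟨j, h2⟩ = zeroPt (Ψ ⟨j, h2⟩) := by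
        simp only [hf]; rw [dif_neg hj2, dif_neg hj3]
      have hfq : f q ⟨j, h2⟩ = zeroPt (Ψ ⟨j, h2⟩) := by
        simp only [hf]; rw [dif_neg hj2, dif_neg hj3]
      rw [hfp, hfq, dist_self]
    -- assemble the sum
    set G : ℕ → ℝ := fun j =>
      if hj : j < m' then
        ((Sfin p q).sup' (Sfin_nonempty p q) (ψ ⟨j, hj⟩)
          - (Sfin p q).inf' (Sfin_nonempty p q) (ψ ⟨j, hj⟩))
      else 0 with hG
    have hSigd : Sigd ψ p q = ∑ j ∈ Finset.range m', G j := by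
      rw [← Fin.sum_univ_eq_sum_range G m']
      apply Finset.sum_congr rfl
      intro i _
      simp only [hG]
      rw [dif_pos i.isLt]
    have hC : ∑ j ∈ Finset.Ico (2 * m') N, F j = rho p q := by
      rw [Finset.sum_eq_single_of_mem (2 * m')
        (Finset.mem_Ico.2 ⟨le_refl _, by omega⟩), hFC]
      intro j hj hne
      rw [Finset.mem_Ico] at hj
      exact hFzero j (by omega) hj.2
    have hAB : (∑ j ∈ Finset.range m', F j) + (∑ j ∈ Finset.Ico m' (2 * m'), F j)
        = 2 * Sigd ψ p q := by
      rw [Finset.sum_Ico_eq_sum_range]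
      have h2m : 2 * m' - m' = m' := by omega
      rw [h2m, ← Finset.sum_add_distrib, hSigd, Finset.mul_sum]
      apply Finset.sum_congr rfl
      intro j hj
      have hjm : j < m' := Finset.mem_range.1 hj
      rw [hFA j hjm, hFB j hjm]
      simp only [hG]
      rw [dif_pos hjm]
      ring
    rw [h0, ← Finset.sum_range_add_sum_Ico F (show 2 * m' ≤ N by omega),
      ← Finset.sum_range_add_sum_Ico F (show m' ≤ 2 * m' by omega), hAB, hC]
  -- final biLipschitz estimates
  have hrho_nonneg : ∀ p q : Lamp X, 0 ≤ rho p q := by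
    intro p q; unfold rho; split <;> norm_num
  refine ⟨f, ?_, (K * D)⁻¹, by positivity, ?_⟩
  · intro p q hfeq
    have h0' : piL1Dist (fun i => inferInstance) (f p) (f q) = 0 := by
      rw [hfeq, hpi]
      simp
    rw [hdist p q] at h0'
    have hSig2 := Sigd_nonneg ψ p q
    have hρ := hrho_nonneg p q
    have hA : p.1 = q.1 := by
      by_contra hA
      unfold rho at h0'
      rw [if_neg hA] at h0'
      linarith
    have hx : p.2 = q.2 := by
      by_contra hx
      have h1 := hlow p.2 q.2
      have h2 : (∑ i, |ψ i p.2 - ψ i q.2|) ≤ Sigd ψ p q :=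
        sum_abs_le_Sigd ψ p q (self_mem_Sfin p q) (self_mem_Sfin' p q)
      have hd : 0 < dist p.2 q.2 := dist_pos.2 hx
      have hρ0 : rho p q = 0 := by unfold rho; rw [if_pos hA]
      rw [hρ0] at h0'
      have hpos : 0 < dist p.2 q.2 / D := by positivity
      linarith
    exact Prod.ext hA hx
  · intro p q
    rw [hdist p q]
    have h1 := Sigd_le_TSP ψ hlip p q
    have h2 := TSCP_le_Sigd ψ hDpos hlow p q
    have h3 := heff p q
    have h4 := Sigd_nonneg ψ p q
    have h5 := hrho_nonneg p q
    have h7 := TSP_nonneg p q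
    have h6 : TSP (dist : X → X → ℝ) p q ≤ K * (D * Sigd ψ p q) :=
      le_trans h3 (mul_le_mul_of_nonneg_left h2 (by linarith))
    have e1 : 0 ≤ (K * D - 1) * rho p q := mul_nonneg (by linarith) h5
    have e2 : 0 ≤ K * D * Sigd ψ p q := mul_nonneg hKD.le h4
    constructor
    · rw [inv_mul_le_iff₀ hKD]
      unfold dLa
      nlinarith
    · have hKne : K ≠ 0 := by linarith
      have hDne : D ≠ 0 := by linarith
      have hsimp : 6 * K * D * (K * D)⁻¹ * dLa (dist : X → X → ℝ) p q
          = 6 * dLa (dist : X → X → ℝ) p q := by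
        field_simp
      rw [hsimp]
      unfold dLa
      linarith


end AuxiliaryRTree

/-- Let `X` be a finite `K`-TSP-efficient metric space that biLipschitz
embeds into `ℓ1^m` (i.e. `c_1^{m,dom}(X,d) < ∞`). Then `(La(X), d_La)` admits a
`C`-biLipschitz embedding into an ℓ1-product of `3m` ℝ-trees with
`C ≤ 6K · c_1^{m,dom}(X,d) ≤ 6Km · c_{ℓ1^m}(X)` (expressed here by: for every `D ≥ 1`
strictly above the respective infimum, there is such an embedding with constant `6KD`,
resp. `6KmD`). -/
theorem statement12 (X : Type u) [MetricSpace X] [Fintype X] (m : ℕ) (K : ℝ) (hK : 1 ≤ K)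
    (heff : TSPEfficient (dist : X → X → ℝ) K)
    (hfin : c1dom (dist : X → X → ℝ) m ≠ ⊤) :
    (∀ D : ℝ, 1 ≤ D → c1dom (dist : X → X → ℝ) m < ENNReal.ofReal D →
      ∃ (T : Fin (3 * m) → Type u) (I : ∀ i, MetricSpace (T i)),
        (∀ i, @IsRTree (T i) (I i)) ∧
        ∃ f : Lamp X → ∀ i, T i,
          BiLipWith (dLa (dist : X → X → ℝ)) (piL1Dist I) (6 * K * D) f) ∧
    (∀ D : ℝ, 1 ≤ D → cEmb (dist : X → X → ℝ) (l1Dist m) < ENNReal.ofReal D →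
      ∃ (T : Fin (3 * m) → Type u) (I : ∀ i, MetricSpace (T i)),
        (∀ i, @IsRTree (T i) (I i)) ∧
        ∃ f : Lamp X → ∀ i, T i,
          BiLipWith (dLa (dist : X → X → ℝ)) (piL1Dist I) (6 * K * m * D) f) := by
  have hmpos : 0 < m := by
    by_contra hm
    have hm0 : m = 0 := by omega
    subst hm0
    apply hfin
    unfold c1dom
    rw [sInf_eq_top]
    rintro D' ⟨C, hC, rfl, φ, α, _, _, _, hsum, _⟩
    simp at hsum
  constructor
  · intro D hD hlt
    unfold c1dom at hlt
    obtain ⟨D', hmem, hlt'⟩ := sInf_lt_iff.1 hlt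
    obtain ⟨C, hC, rfl, φ, α, hinjφ, hlipφ, hαnn, hαsum, hlowφ⟩ := hmem
    have hCD : C < D := (ENNReal.ofReal_lt_ofReal_iff (by linarith)).1 hlt'
    have habs : ∀ x y : X, (∑ i, |α i * φ i x - α i * φ i y|) = ∑ i, α i * |φ i x - φ i y| := by
      intro x y
      apply Finset.sum_congr rfl
      intro i _
      rw [← mul_sub, abs_mul, abs_of_nonneg (hαnn i)]
    have hlip : ∀ x y : X, (∑ i, |α i * φ i x - α i * φ i y|) ≤ dist x y := by
      intro x y
      rw [habs x y]
      calc ∑ i, α i * |φ i x - φ i y| ≤ ∑ i, α i * dist x y :=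
        Finset.sum_le_sum (fun i _ => mul_le_mul_of_nonneg_left (hlipφ i x y) (hαnn i))
      _ = dist x y := by rw [← Finset.sum_mul, hαsum, one_mul]
    have hlow : ∀ x y : X, dist x y / D ≤ ∑ i, |α i * φ i x - α i * φ i y| := by
      intro x y
      rw [habs x y]
      refine le_trans ?_ (hlowφ x y)
      rw [div_le_div_iff₀ (by linarith : (0:ℝ) < D) hC]
      nlinarith [dist_nonneg (x := x) (y := y)]
    exact main_embed K D hK hD heff m (fun i x => α i * φ i x) hlip hlow (3 * m) (by omega)
  · intro D hD hlt
    unfold cEmb at hlt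
    obtain ⟨D', hmem, hlt'⟩ := sInf_lt_iff.1 hlt
    obtain ⟨C, hC, rfl, g, hg⟩ := hmem
    obtain ⟨hginj, s, hs, hgbl⟩ :=
      (hg : Function.Injective g ∧ ∃ s : ℝ, 0 < s ∧ ∀ x y : X,
        s * dist x y ≤ l1Dist m (g x) (g y) ∧ l1Dist m (g x) (g y) ≤ C * s * dist x y)
    have hCD : C < D := (ENNReal.ofReal_lt_ofReal_iff (by linarith)).1 hlt'
    have hCs : (0:ℝ) < C * s := mul_pos hC hs
    have hm1 : (1:ℝ) ≤ (m:ℝ) := by exact_mod_cast hmpos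
    set ψ : Fin m → X → ℝ := fun i x => g x i / (C * s) with hψdef
    have hψeq : ∀ x y : X, (∑ i, |ψ i x - ψ i y|) = (∑ i, |g x i - g y i|) / (C * s) := by
      intro x y
      rw [Finset.sum_div]
      apply Finset.sum_congr rfl
      intro i _
      rw [hψdef]
      simp only
      rw [div_sub_div_same, abs_div, abs_of_pos hCs]
    have hlip : ∀ x y : X, (∑ i, |ψ i x - ψ i y|) ≤ dist x y := by
      intro x y
      rw [hψeq x y, div_le_iff₀ hCs]
      calc (∑ i, |g x i - g y i|) = l1Dist m (g x) (g y) := rfl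
      _ ≤ C * s * dist x y := (hgbl x y).2
      _ = dist x y * (C * s) := by ring
    have hmD : (1:ℝ) ≤ (m:ℝ) * D := by nlinarith
    have hlow : ∀ x y : X, dist x y / ((m:ℝ) * D) ≤ ∑ i, |ψ i x - ψ i y| := by
      intro x y
      rw [hψeq x y]
      have h1 : s * dist x y ≤ ∑ i, |g x i - g y i| := (hgbl x y).1
      have hstep : dist x y / ((m:ℝ) * D) ≤ dist x y / C := by
        have hc2 : C ≤ (m:ℝ) * D := by nlinarith
        rw [div_le_div_iff₀ (by positivity) hC]
        nlinarith [mul_le_mul_of_nonneg_left hc2 (dist_nonneg (x := x) (y := y))]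
      refine le_trans hstep ?_
      rw [div_le_div_iff₀ hC hCs]
      nlinarith [mul_le_mul_of_nonneg_left h1 hC.le]
    have h := main_embed K ((m:ℝ) * D) hK hmD heff m ψ hlip hlow (3 * m) (by omega)
    obtain ⟨T, I, hT, f, hfbl⟩ := h
    refine ⟨T, I, hT, f, ?_⟩
    have heq : 6 * K * (m:ℝ) * D = 6 * K * ((m:ℝ) * D) := by ring
    rw [heq]
    exact hfbl


end Lamplighter
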